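/- Let C be a nonempty closed convex subset of a real Hilbert space H, T : C → C nonexpansive, and x ∈ C. Then for every δ > 0 there exists N ∈ ℕ such that for all m ≥ N and all y ∈ C, the Cesàro average A_m y = (1/(m+1)) Σ_{j=0}^{m} T^j y satisfies ‖A_m y - T(A_m y)‖ ≤ δ, provided C is bounded. -/

import Mathlib

open Finset

local notation "⟪" x ", " y "⟫" => @inner ℝ _ _ x y

set_option maxHeartbeats 1600000 in
theorem stmt_9 {H : Type*} [NormedAddCommGroup H] [InnerProductSpace ℝ H]
    (C : Set H) (hC : C.Nonempty) (hCb : Bornology.IsBounded C)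
    (hCc : IsClosed C) (hCv : Convex ℝ C)
    (T : H → H) (hT : Set.MapsTo T C C)
    (hTne : ∀ x ∈ C, ∀ y ∈ C, ‖T x - T y‖ ≤ ‖x - y‖) :
    ∀ δ : ℝ, 0 < δ → ∃ N : ℕ, ∀ m ≥ N, ∀ y ∈ C,
      ‖((m + 1 : ℝ)⁻¹ • ∑ j ∈ Finset.range (m + 1), T^[j] y) -
          T ((m + 1 : ℝ)⁻¹ • ∑ j ∈ Finset.range (m + 1), T^[j] y)‖ ≤ δ := by
  obtain ⟨M₀, hM₀⟩ := isBounded_iff_forall_norm_le.mp hCb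
  set M := max M₀ 0 with hMdef
  have hM : ∀ z ∈ C, ‖z‖ ≤ M := fun z hz => (hM₀ z hz).trans (le_max_left _ _)
  have hM0 : (0:ℝ) ≤ M := le_max_right _ _
  clear_value M
  intro δ hδ
  obtain ⟨N, hN⟩ := exists_nat_ge (max (4*M/δ) (20*M^2/δ^2))
  refine ⟨N, fun m hm y hy => ?_⟩
  have hk : (0:ℝ) < (m:ℝ) + 1 := by positivity
  set k : ℝ := (m:ℝ) + 1 with hkdef
  have hkN : (N:ℝ) ≤ k := by
    have : (N:ℝ) ≤ (m:ℝ) := by exact_mod_cast hm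
    linarith
  set p : ℕ → H := fun j => T^[j] y with hpdef
  have hpC : ∀ j, p j ∈ C := by
    intro j; induction j with
    | zero => simpa [hpdef] using hy
    | succ n ih =>
        have : p (n+1) = T (p n) := Function.iterate_succ_apply' T n y
        rw [this]; exact hT ih
  have hpsucc : ∀ j, p (j+1) = T (p j) := fun j => Function.iterate_succ_apply' T j y
  set S : H := k⁻¹ • ∑ j ∈ range (m+1), p j with hSdef
  set S' : H := k⁻¹ • ∑ j ∈ range (m+1), p (j+1) with hS'def
  have hmem : ∀ (q : ℕ → H), (∀ j, q j ∈ C) → k⁻¹ • ∑ j ∈ range (m+1), q j ∈ C := by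
    intro q hq
    rw [Finset.smul_sum]
    refine hCv.sum_mem (fun i _ => by positivity) ?_ (fun i _ => hq i)
    rw [Finset.sum_const, Finset.card_range, nsmul_eq_mul]
    push_cast
    field_simp
    exact hkdef.symm
  have hSC : S ∈ C := hmem p hpC
  have hS'C : S' ∈ C := hmem _ (fun j => hpC (j+1))
  have hSM : ‖S‖ ≤ M := hM _ hSC
  have hS'M : ‖S'‖ ≤ M := hM _ hS'C
  -- key squared inequality
  have key : ∀ j ∈ range (m+1), ‖T S - p (j+1)‖^2 ≤ ‖S - p j‖^2 := by
    intro j _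
    have h1 := hTne S hSC (p j) (hpC j)
    rw [← hpsucc j] at h1
    exact pow_le_pow_left₀ (norm_nonneg _) h1 2
  have hsum : ∑ j ∈ range (m+1), ‖T S - p (j+1)‖^2 ≤ ∑ j ∈ range (m+1), ‖S - p j‖^2 :=
    Finset.sum_le_sum key
  -- expansion of the sums
  have expand : ∀ (a : H) (q : ℕ → H),
      ∑ j ∈ range (m+1), ‖a - q j‖^2
        = k * ‖a‖^2 - 2 * ⟪a, ∑ j ∈ range (m+1), q j⟫
            + ∑ j ∈ range (m+1), ‖q j‖^2 := by
    intro a q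
    simp only [norm_sub_sq_real, Finset.sum_add_distrib, Finset.sum_sub_distrib,
      Finset.sum_const, Finset.card_range, nsmul_eq_mul, inner_sum, Finset.mul_sum]
    push_cast
    ring
  have hkne : k ≠ 0 := ne_of_gt hk
  have hsumS : ∑ j ∈ range (m+1), p j = k • S := by
    rw [hSdef, smul_inv_smul₀ hkne]
  have hsumS' : ∑ j ∈ range (m+1), p (j+1) = k • S' := by
    rw [hS'def, smul_inv_smul₀ hkne]
  clear_value k p S S'
  rw [expand (T S) (fun j => p (j+1)), expand S p, hsumS, hsumS',
    real_inner_smul_right, real_inner_smul_right, real_inner_self_eq_norm_sq] at hsum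
  -- telescoping for the norm-squared sums
  set B : ℝ := ∑ j ∈ range (m+1), ‖p j‖^2 with hBdef
  set B' : ℝ := ∑ j ∈ range (m+1), ‖p (j+1)‖^2 with hB'def
  clear_value B B'
  have htel : B - B' = ‖p 0‖^2 - ‖p (m+1)‖^2 := by
    rw [hBdef, hB'def, Finset.sum_range_succ' (fun j => ‖p j‖^2) m,
      Finset.sum_range_succ (fun j => ‖p (j+1)‖^2) m]
    ring
  have hBB' : B - B' ≤ M^2 := by
    have h0 : ‖p 0‖ ≤ M := hM _ (hpC 0)
    have h1 : (0:ℝ) ≤ ‖p (m+1)‖ := norm_nonneg _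
    nlinarith [norm_nonneg (p 0)]
  -- telescoping for the vector sums
  have hvtel : S' - S = k⁻¹ • (p (m+1) - p 0) := by
    rw [hS'def, hSdef, ← smul_sub]
    congr 1
    rw [Finset.sum_range_succ' p m, Finset.sum_range_succ (fun j => p (j+1)) m]
    abel
  have hSS' : ‖S' - S‖ ≤ 2*M/k := by
    rw [hvtel, norm_smul, norm_inv, Real.norm_eq_abs, abs_of_pos hk]
    rw [div_eq_inv_mul]
    gcongr
    calc ‖p (m+1) - p 0‖ ≤ ‖p (m+1)‖ + ‖p 0‖ := norm_sub_le _ _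
      _ ≤ M + M := add_le_add (hM _ (hpC _)) (hM _ (hpC 0))
      _ = 2*M := by ring
  -- main estimate
  have hmain : ‖T S - S'‖^2 ≤ 5*M^2/k := by
    have hexp : ‖T S - S'‖^2 = ‖T S‖^2 - 2 * ⟪T S, S'⟫ + ‖S'‖^2 :=
      norm_sub_sq_real _ _
    have hdiff : ‖S'‖^2 - ‖S‖^2 ≤ 2*M*(2*M/k) := by
      have habs : ‖S'‖ - ‖S‖ ≤ ‖S' - S‖ := norm_sub_norm_le _ _
      have h1 : ‖S'‖ - ‖S‖ ≤ 2*M/k := habs.trans hSS'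
      have h2 : ‖S'‖ + ‖S‖ ≤ 2*M := by linarith
      have h3 : (0:ℝ) ≤ ‖S'‖ + ‖S‖ := by positivity
      nlinarith [mul_le_mul h1 h2 h3 (by positivity : (0:ℝ) ≤ 2*M/k)]
    have hmain' : k * ‖T S - S'‖^2 ≤ 5*M^2 := by
      have e3 : k * ‖T S - S'‖^2
          = k*‖T S‖^2 - 2*(k*⟪T S, S'⟫) + k*‖S'‖^2 := by rw [hexp]; ring
      have e4 : k * ‖T S - S'‖^2 ≤ k*(‖S'‖^2 - ‖S‖^2) + (B - B') := by
        rw [e3]; linarith [hsum]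
      have e5 : k*(‖S'‖^2 - ‖S‖^2) ≤ k*(2*M*(2*M/k)) :=
        mul_le_mul_of_nonneg_left hdiff hk.le
      have e6 : k*(2*M*(2*M/k)) = 4*M^2 := by field_simp; ring
      linarith
    rw [le_div_iff₀ hk]
    linarith [hmain']
  have hfin : ‖S - T S‖ ≤ 2*M/k + Real.sqrt (5*M^2/k) := by
    calc ‖S - T S‖ ≤ ‖S - S'‖ + ‖S' - T S‖ := norm_sub_le_norm_sub_add_norm_sub _ _ _
      _ ≤ 2*M/k + Real.sqrt (5*M^2/k) := by
          gcongr
          · rw [norm_sub_rev]; exact hSS'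
          · rw [norm_sub_rev]
            rw [show ‖T S - S'‖ = Real.sqrt (‖T S - S'‖^2) by
              rw [Real.sqrt_sq (norm_nonneg _)]]
            exact Real.sqrt_le_sqrt hmain
  -- numeric bound
  have hk1 : 4*M/δ ≤ k := le_trans (le_trans (le_max_left _ _) hN) hkN
  have hk2 : 20*M^2/δ^2 ≤ k := le_trans (le_trans (le_max_right _ _) hN) hkN
  have hb1 : 2*M/k ≤ δ/2 := by
    rw [div_le_div_iff₀ hk (by norm_num : (0:ℝ) < 2)]
    rw [div_le_iff₀ hδ] at hk1
    linarith
  have hb2 : Real.sqrt (5*M^2/k) ≤ δ/2 := by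
    have h5 : 5*M^2/k ≤ δ^2/4 := by
      rw [div_le_div_iff₀ hk (by norm_num : (0:ℝ) < 4)]
      rw [div_le_iff₀ (by positivity : (0:ℝ) < δ^2)] at hk2
      nlinarith
    calc Real.sqrt (5*M^2/k) ≤ Real.sqrt (δ^2/4) := Real.sqrt_le_sqrt h5
      _ = δ/2 := by
        rw [show δ^2/4 = (δ/2)^2 by ring, Real.sqrt_sq (by positivity)]
  calc ‖S - T S‖ ≤ 2*M/k + Real.sqrt (5*M^2/k) := hfin
    _ ≤ δ := by linarith
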